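/- Let n ≥ 1, let d₁,…,dₙ be positive integers, let d = ∑_{i=1}^{n} dᵢ, let k be a natural number with k ≤ d, and set pᵢ = 1 − dᵢ/(2·d²) for each i. Then ∑_{i=1}^{n} ((4·d² − dᵢ)/(4·d²·n)) · S(pᵢ) ≥ (2k + 1)/(8·d·n) if and only if ∑_{i=1}^{n} √(dᵢ) ≥ k, where S(p) = (√(2 − 2p) − p + 1)/(2p + 2). -/

import Mathlib

/-- Correctness of the threshold comparison in the reduction from SqrtSum to
StatNE: with `pᵢ = 1 − dᵢ/(2d²)` and `S(p) = (√(2 − 2p) − p + 1)/(2p + 2)`,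
`∑ᵢ ((4d² − dᵢ)/(4d²n)) · S(pᵢ) ≥ (2k + 1)/(8dn)` iff `∑ᵢ √dᵢ ≥ k`. -/
theorem stmt_14 (n : ℕ) (hn : 1 ≤ n) (d : ℕ → ℕ)
    (hd : ∀ i ∈ Finset.Icc 1 n, 0 < d i) (D : ℕ) (hD : D = ∑ i ∈ Finset.Icc 1 n, d i)
    (k : ℕ) (hk : k ≤ D) :
    (∑ i ∈ Finset.Icc 1 n,
        ((4 * (D : ℝ) ^ 2 - (d i : ℝ)) / (4 * (D : ℝ) ^ 2 * n)) *
          ((Real.sqrt (2 - 2 * (1 - (d i : ℝ) / (2 * (D : ℝ) ^ 2))) -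
              (1 - (d i : ℝ) / (2 * (D : ℝ) ^ 2)) + 1) /
            (2 * (1 - (d i : ℝ) / (2 * (D : ℝ) ^ 2)) + 2)))
      ≥ (2 * (k : ℝ) + 1) / (8 * (D : ℝ) * n) ↔
    ∑ i ∈ Finset.Icc 1 n, Real.sqrt (d i) ≥ (k : ℝ) := by
  have hne : (Finset.Icc 1 n).Nonempty := ⟨1, by simp [hn]⟩
  have hD0 : 0 < D := by
    rw [hD]; exact Finset.sum_pos hd hne
  have hDr : (0:ℝ) < D := by exact_mod_cast hD0
  have hnr : (0:ℝ) < n := by exact_mod_cast hn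
  have hkey : ∀ i ∈ Finset.Icc 1 n,
      ((4 * (D : ℝ) ^ 2 - (d i : ℝ)) / (4 * (D : ℝ) ^ 2 * n)) *
          ((Real.sqrt (2 - 2 * (1 - (d i : ℝ) / (2 * (D : ℝ) ^ 2))) -
              (1 - (d i : ℝ) / (2 * (D : ℝ) ^ 2)) + 1) /
            (2 * (1 - (d i : ℝ) / (2 * (D : ℝ) ^ 2)) + 2))
      = (2 * (D : ℝ) * Real.sqrt (d i) + (d i : ℝ)) / (8 * (D : ℝ) ^ 2 * n) := by
    intro i hi
    have hdiD : (d i : ℝ) ≤ D := by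
      rw [hD]; push_cast
      exact Finset.single_le_sum (f := fun j => ((d j : ℝ))) (fun j hj => by positivity) hi
    have h4 : (d i : ℝ) < 4 * (D : ℝ) ^ 2 := by
      have hD1 : (1:ℝ) ≤ D := by exact_mod_cast hD0
      nlinarith
    have h1 : 2 - 2 * (1 - (d i : ℝ) / (2 * (D : ℝ) ^ 2)) = (d i : ℝ) / (D : ℝ) ^ 2 := by
      field_simp; ring
    have h2 : Real.sqrt ((d i : ℝ) / (D : ℝ) ^ 2) = Real.sqrt (d i) / D := by
      rw [Real.sqrt_div (by positivity), Real.sqrt_sq hDr.le]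
    rw [h1, h2]
    have hden : 2 * (1 - (d i : ℝ) / (2 * (D : ℝ) ^ 2)) + 2 = (4 * (D:ℝ)^2 - d i) / (D:ℝ)^2 := by
      field_simp; ring
    rw [hden]
    have h4ne : 4 * (D:ℝ)^2 - (d i : ℝ) ≠ 0 := by linarith
    field_simp
    ring
  rw [Finset.sum_congr rfl hkey, ← Finset.sum_div, Finset.sum_add_distrib,
    ← Finset.mul_sum]
  have hsumd : ∑ i ∈ Finset.Icc 1 n, (d i : ℝ) = D := by
    rw [hD]; push_cast; ring
  rw [hsumd]
  set S := ∑ i ∈ Finset.Icc 1 n, Real.sqrt (d i) with hS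
  rw [ge_iff_le, ge_iff_le, div_le_div_iff₀ (by positivity) (by positivity)]
  have hfac : (0:ℝ) < 8 * (D:ℝ)^2 * n := by positivity
  have heq : (2*(D:ℝ)*S + D) * (8*(D:ℝ)*n) = (2*S+1) * (8*(D:ℝ)^2*n) := by ring
  rw [heq]
  have heq2 : (2*(k:ℝ)+1) * (8*(D:ℝ)^2*n) = ((2*(k:ℝ)+1)) * (8*(D:ℝ)^2*n) := rfl
  constructor
  · intro h
    have h2 : (2*(k:ℝ)+1) ≤ 2*S+1 := le_of_mul_le_mul_right h hfac
    linarith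
  · intro h
    have h2 : (2*(k:ℝ)+1) ≤ 2*S+1 := by linarith
    exact mul_le_mul_of_nonneg_right h2 hfac.le
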